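/- Let γ : X → (P_fin X)^A be an image-finite labelled transition system. Define similarity ≾ as the greatest relation R ⊆ X × X such that x R y implies: for all a ∈ A and x' ∈ γ(x)(a) there exists y' ∈ γ(y)(a) with x' R y'. Define the modal logic with syntax φ ::= ⊤ | φ ∧ ψ | ⟨a⟩φ and standard semantics. Then for all states x, y: x ≾ y if and only if every formula φ satisfied by x is also satisfied by y. -/

import Mathlib

/-- Formulas of the logic `φ ::= ⊤ | φ ∧ ψ | ⟨a⟩φ`. -/
inductive SimFormula (A : Type) : Type
  | top : SimFormula A
  | and : SimFormula A → SimFormula A → SimFormula A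
  | dia : A → SimFormula A → SimFormula A

variable {X A : Type}

/-- Standard semantics of the logic on an LTS. -/
def simSat (γ : X → A → Finset X) : X → SimFormula A → Prop
  | _, SimFormula.top => True
  | x, SimFormula.and φ ψ => simSat γ x φ ∧ simSat γ x ψ
  | x, SimFormula.dia a φ => ∃ x' ∈ γ x a, simSat γ x' φ

/-- `R` is a simulation. -/
def IsSimulation (γ : X → A → Finset X) (R : X → X → Prop) : Prop :=
  ∀ x y, R x y → ∀ a : A, ∀ x' ∈ γ x a, ∃ y' ∈ γ y a, R x' y'

/-- Conjunction of a list of formulas. -/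
def conjList : List (SimFormula A) → SimFormula A
  | [] => SimFormula.top
  | φ :: l => SimFormula.and φ (conjList l)

lemma simSat_conjList (γ : X → A → Finset X) (z : X) (l : List (SimFormula A)) :
    simSat γ z (conjList l) ↔ ∀ φ ∈ l, simSat γ z φ := by
  induction l with
  | nil => simp [conjList, simSat]
  | cons φ l ih => simp [conjList, simSat, ih]

lemma sim_forward (γ : X → A → Finset X) (R : X → X → Prop) (hR : IsSimulation γ R)
    (φ : SimFormula A) : ∀ x y, R x y → simSat γ x φ → simSat γ y φ := by
  induction φ with
  | top => intro x y _ _; trivial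
  | and φ ψ ihφ ihψ =>
    intro x y hxy h
    exact ⟨ihφ x y hxy h.1, ihψ x y hxy h.2⟩
  | dia a φ ih =>
    intro x y hxy h
    obtain ⟨x', hx', hsat⟩ := h
    obtain ⟨y', hy', hR'⟩ := hR x y hxy a x' hx'
    exact ⟨y', hy', ih x' y' hR' hsat⟩

/-- Hennessy–Milner theorem for similarity on image-finite LTSs: `x` is simulated by
`y` (i.e. related by the greatest simulation) iff every formula of the
`⊤`/`∧`/`⟨a⟩`-logic satisfied by `x` is satisfied by `y`. -/
theorem similarity_iff_logical_inclusion (γ : X → A → Finset X) (x y : X) :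
    (∃ R : X → X → Prop, IsSimulation γ R ∧ R x y) ↔
      ∀ φ : SimFormula A, simSat γ x φ → simSat γ y φ := by
  constructor
  · rintro ⟨R, hR, hxy⟩ φ h
    exact sim_forward γ R hR φ x y hxy h
  · intro h
    refine ⟨fun u v => ∀ φ : SimFormula A, simSat γ u φ → simSat γ v φ, ?_, h⟩
    intro u v huv a u' hu'
    by_contra hcon
    push_neg at hcon
    -- for each v' ∈ γ v a there is a formula satisfied by u' but not v'
    have hsep : ∀ v' ∈ γ v a, ∃ φ : SimFormula A, simSat γ u' φ ∧ ¬ simSat γ v' φ := by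
      intro v' hv'
      by_contra hc
      push_neg at hc
      obtain ⟨φ, hφ1, hφ2⟩ := hcon v' hv'
      exact hφ2 (hc φ hφ1)
    choose f hf1 hf2 using hsep
    classical
    -- list of distinguishing formulas
    set l := (γ v a).attach.toList.map (fun p => f p.1 p.2) with hl
    have hu'l : simSat γ u' (conjList l) := by
      rw [simSat_conjList]
      intro φ hφ
      simp only [hl, List.mem_map] at hφ
      obtain ⟨⟨v', hv'⟩, _, rfl⟩ := hφ
      exact hf1 v' hv'
    have hdia : simSat γ u (SimFormula.dia a (conjList l)) := ⟨u', hu', hu'l⟩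
    have := huv _ hdia
    obtain ⟨v', hv', hsat⟩ := this
    rw [simSat_conjList] at hsat
    exact hf2 v' hv' (hsat (f v' hv') (by
      simp only [hl, List.mem_map]
      exact ⟨⟨v', hv'⟩, by simp, rfl⟩))
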